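/- Let α, β ∈ C[0,1] with α(t) < β(t) for all t. Let x ∈ C[0,1] satisfy π(x) < 1, x(π(x)) = β(π(x)) and inf{ t > π(x) : x(t) > β(t) } = π(x) (i.e. x ∈ C_1). Then for every sequence (x_n) in D[0,1] converging to x in the Skorohod topology, limsup_{n → ∞} π(x_n) ≤ π(x). -/

import Mathlib

open Set Filter

/-- A function `x : ℝ → ℝ` is RCLL (càdlàg) on `[0,1]`. -/
def RCLL (x : ℝ → ℝ) : Prop :=
  (∀ t ∈ Set.Ico (0:ℝ) 1,
      Filter.Tendsto x (nhdsWithin t (Set.Ioc t 1)) (nhds (x t))) ∧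
  (∀ t ∈ Set.Ioc (0:ℝ) 1,
      ∃ L : ℝ, Filter.Tendsto x (nhdsWithin t (Set.Ico 0 t)) (nhds L))

/-- The uniform "norm" of a function over `[0,1]`. -/
noncomputable def unifNorm (f : ℝ → ℝ) : ℝ :=
  sSup ((fun t => |f t|) '' Set.Icc 0 1)

/-- Membership in `Λ`. -/
def MemLambda (l : ℝ → ℝ) : Prop :=
  ContinuousOn l (Set.Icc 0 1) ∧ StrictMonoOn l (Set.Icc 0 1) ∧
    Set.BijOn l (Set.Icc 0 1) (Set.Icc 0 1) ∧ l 0 = 0 ∧ l 1 = 1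

/-- Skorohod convergence of a sequence `x_n → x` in `D[0,1]`. -/
def SkorohodTendsto (xn : ℕ → ℝ → ℝ) (x : ℝ → ℝ) : Prop :=
  ∃ l : ℕ → ℝ → ℝ, (∀ n, MemLambda (l n)) ∧
    Filter.Tendsto (fun n => unifNorm (fun t => l n t - t)) Filter.atTop (nhds 0) ∧
    Filter.Tendsto (fun n => unifNorm (fun t => xn n t - x (l n t))) Filter.atTop (nhds 0)

/-- The first exit time `π(x) = inf{ t ∈ [0,1] : x(t) ∉ (α(t), β(t)) } ∧ 1`
(with the convention `inf ∅ = +∞`, realized by adjoining `{1}` before taking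
the infimum, since the exit set is contained in `[0,1]`). -/
noncomputable def exitTime (a b x : ℝ → ℝ) : ℝ :=
  sInf ({t ∈ Set.Icc (0:ℝ) 1 | x t ≤ a t ∨ b t ≤ x t} ∪ {1})

/-- Membership in `C_1`: a continuous path that exits before time `1` at the
upper barrier `β`, with `inf{ t > π(x) : x(t) > β(t) } = π(x)`. -/
def MemC1 (a b x : ℝ → ℝ) : Prop :=
  ContinuousOn x (Set.Icc 0 1) ∧ exitTime a b x < 1 ∧
    x (exitTime a b x) = b (exitTime a b x) ∧
    sInf ({t | exitTime a b x < t ∧ t ≤ 1 ∧ b t < x t} ∪ {1}) = exitTime a b x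

lemma exitTime_bddBelow (a b f : ℝ → ℝ) :
    BddBelow ({t ∈ Set.Icc (0:ℝ) 1 | f t ≤ a t ∨ b t ≤ f t} ∪ {1}) := by
  refine ⟨0, ?_⟩
  rintro s (⟨⟨h0, _⟩, _⟩ | rfl)
  · exact h0
  · norm_num

lemma exitTime_nonneg (a b f : ℝ → ℝ) : 0 ≤ exitTime a b f := by
  refine le_csInf ⟨1, Or.inr rfl⟩ ?_
  rintro s (⟨⟨h0, _⟩, _⟩ | rfl)
  · exact h0
  · norm_num

lemma exitTime_le_of_mem (a b f : ℝ → ℝ) {t : ℝ} (ht : t ∈ Set.Icc (0:ℝ) 1)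
    (h : b t ≤ f t) : exitTime a b f ≤ t :=
  csInf_le (exitTime_bddBelow a b f) (Or.inl ⟨ht, Or.inr h⟩)

lemma abs_le_unifNorm {f : ℝ → ℝ} {M : ℝ} (hM : ∀ t ∈ Set.Icc (0:ℝ) 1, |f t| ≤ M)
    {t : ℝ} (ht : t ∈ Set.Icc (0:ℝ) 1) : |f t| ≤ unifNorm f := by
  refine le_csSup ⟨M, ?_⟩ ⟨t, ht, rfl⟩
  rintro y ⟨s, hs, rfl⟩
  exact hM s hs

lemma rcll_bounded {f : ℝ → ℝ} (hf : RCLL f) :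
    ∃ M, ∀ t ∈ Set.Icc (0:ℝ) 1, |f t| ≤ M := by
  refine (isCompact_Icc (a := (0:ℝ)) (b := 1)).induction_on
    (p := fun s => ∃ M, ∀ t ∈ s, |f t| ≤ M) ⟨0, by simp⟩
    (fun s t hst ht => ht.imp fun M hM v hv => hM v (hst hv))
    (fun s t hs ht => ?_) (fun u hu => ?_)
  · obtain ⟨M, hM⟩ := hs
    obtain ⟨N, hN⟩ := ht
    refine ⟨max M N, ?_⟩
    rintro v (hv | hv)
    · exact (hM v hv).trans (le_max_left _ _)
    · exact (hN v hv).trans (le_max_right _ _)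
  · have hright : ∃ C, ∀ᶠ v in nhdsWithin u (Set.Ioc u 1), |f v| ≤ C := by
      rcases lt_or_ge u 1 with h1 | h1
      · refine ⟨|f u| + 1, ?_⟩
        have ht := (continuous_abs.tendsto (f u)).comp (hf.1 u ⟨hu.1, h1⟩)
        exact (ht.eventually_lt_const (lt_add_one _)).mono fun v hv => le_of_lt hv
      · refine ⟨0, ?_⟩
        have he : Set.Ioc u 1 = (∅ : Set ℝ) := Set.Ioc_eq_empty (not_lt.mpr h1)
        rw [he, nhdsWithin_empty]
        exact Filter.eventually_bot
    have hleft : ∃ C, ∀ᶠ v in nhdsWithin u (Set.Ico 0 u), |f v| ≤ C := by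
      rcases lt_or_ge 0 u with h0 | h0
      · obtain ⟨L, hL⟩ := hf.2 u ⟨h0, hu.2⟩
        refine ⟨|L| + 1, ?_⟩
        have ht := (continuous_abs.tendsto L).comp hL
        exact (ht.eventually_lt_const (lt_add_one _)).mono fun v hv => le_of_lt hv
      · refine ⟨0, ?_⟩
        have he : Set.Ico (0:ℝ) u = (∅ : Set ℝ) := Set.Ico_eq_empty (not_lt.mpr h0)
        rw [he, nhdsWithin_empty]
        exact Filter.eventually_bot
    obtain ⟨Cr, hCr⟩ := hright
    obtain ⟨Cl, hCl⟩ := hleft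
    set C := max (max Cr Cl) |f u| with hC
    refine ⟨{v | |f v| ≤ C}, ?_, C, fun v hv => hv⟩
    have hsub : Set.Icc (0:ℝ) 1 ⊆ Set.Ico 0 u ∪ ({u} ∪ Set.Ioc u 1) := by
      intro v hv
      rcases lt_trichotomy v u with h | h | h
      · exact Or.inl ⟨hv.1, h⟩
      · exact Or.inr (Or.inl h)
      · exact Or.inr (Or.inr ⟨h, hv.2⟩)
    have hmem : {v | |f v| ≤ C} ∈ nhdsWithin u (Set.Ico 0 u ∪ ({u} ∪ Set.Ioc u 1)) := by
      rw [nhdsWithin_union, nhdsWithin_union, Filter.mem_sup, Filter.mem_sup]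
      have hClC : ∀ᶠ v in nhdsWithin u (Set.Ico 0 u), |f v| ≤ C :=
        hCl.mono fun v hv => hv.trans ((le_max_right Cr Cl).trans (le_max_left _ _))
      have hCrC : ∀ᶠ v in nhdsWithin u (Set.Ioc u 1), |f v| ≤ C :=
        hCr.mono fun v hv => hv.trans ((le_max_left Cr Cl).trans (le_max_left _ _))
      refine ⟨hClC, ?_, hCrC⟩
      rw [nhdsWithin_singleton, Filter.mem_pure]
      show |f u| ≤ C
      exact le_max_right _ _
    exact nhdsWithin_mono u hsub hmem

lemma le_of_forall_pos_le_add' {a b : ℝ} (h : ∀ ε > 0, a ≤ b + ε) : a ≤ b := by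
  by_contra hc
  push_neg at hc
  have := h ((a - b) / 2) (by linarith)
  linarith

/-- For continuous barriers `α < β` and `x ∈ C_1`, every Skorohod-convergent
sequence `x_n → x` in `D[0,1]` satisfies `limsup_n π(x_n) ≤ π(x)`. -/
theorem limsup_exitTime_le (a b : ℝ → ℝ)
    (ha : ContinuousOn a (Set.Icc 0 1)) (hb : ContinuousOn b (Set.Icc 0 1))
    (hab : ∀ t ∈ Set.Icc (0:ℝ) 1, a t < b t)
    (x : ℝ → ℝ) (hx : MemC1 a b x)
    (xn : ℕ → ℝ → ℝ) (hxn : ∀ n, RCLL (xn n))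
    (hconv : SkorohodTendsto xn x) :
    Filter.limsup (fun n => exitTime a b (xn n)) Filter.atTop ≤ exitTime a b x := by
  obtain ⟨l, hl, hlid, hxl⟩ := hconv
  obtain ⟨hxc, hτ1, hτβ, hinf⟩ := hx
  set τ := exitTime a b x with hτdef
  have hτ0 : 0 ≤ τ := exitTime_nonneg a b x
  refine le_of_forall_pos_le_add' fun ε hε => ?_
  refine Filter.limsup_le_of_le
    (Filter.isCoboundedUnder_le_of_le Filter.atTop (x := 0)
      fun n => exitTime_nonneg a b (xn n)) ?_
  -- find a point u just after τ where x is strictly above b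
  have h1mem : (1:ℝ) ∈ ({t | τ < t ∧ t ≤ 1 ∧ b t < x t} ∪ {1}) := Or.inr rfl
  have hlt : sInf ({t | τ < t ∧ t ≤ 1 ∧ b t < x t} ∪ {1}) < min (τ + ε / 2) 1 := by
    rw [hinf]
    exact lt_min (by linarith) hτ1
  obtain ⟨u, hu_mem, hu_lt⟩ := exists_lt_of_csInf_lt ⟨1, h1mem⟩ hlt
  have hu1 : u < 1 := lt_of_lt_of_le hu_lt (min_le_right _ _)
  rcases hu_mem with hu_mem | hu_eq
  swap
  · exact absurd (hu_eq ▸ hu1) (lt_irrefl 1)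
  obtain ⟨hτu, hule, hbu⟩ := hu_mem
  have huIcc : u ∈ Set.Icc (0:ℝ) 1 := ⟨le_of_lt (lt_of_le_of_lt hτ0 hτu), hule⟩
  have huε : u < τ + ε / 2 := lt_of_lt_of_le hu_lt (min_le_left _ _)
  set δ := x u - b u with hδdef
  have hδpos : 0 < δ := by simp only [hδdef]; linarith
  -- continuity of b at u
  have hbc : ContinuousWithinAt b (Set.Icc 0 1) u := hb u huIcc
  rw [Metric.continuousWithinAt_iff] at hbc
  obtain ⟨r, hr, hbr⟩ := hbc (δ / 4) (by linarith)
  -- bound for x on [0,1]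
  obtain ⟨Cx, hCx⟩ := (isCompact_Icc (a := (0:ℝ)) (b := 1)).exists_bound_of_continuousOn hxc
  have hev1 : ∀ᶠ n in Filter.atTop,
      unifNorm (fun t => l n t - t) < min r (ε / 2) :=
    hlid.eventually_lt_const (lt_min hr (by linarith))
  have hev2 : ∀ᶠ n in Filter.atTop,
      unifNorm (fun t => xn n t - x (l n t)) < δ / 4 :=
    hxl.eventually_lt_const (by linarith)
  filter_upwards [hev1, hev2] with n h1 h2
  obtain ⟨hlc, hlm, hlbij, hl0, hl1⟩ := hl n
  obtain ⟨t, htIcc, hlt_eq⟩ := hlbij.surjOn huIcc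
  -- |t - u| is controlled by the time-change distortion
  obtain ⟨C1, hC1⟩ := (isCompact_Icc (a := (0:ℝ)) (b := 1)).exists_bound_of_continuousOn
    (hlc.sub continuousOn_id)
  have htu : |t - u| ≤ unifNorm (fun v => l n v - v) := by
    have hbd := abs_le_unifNorm (f := fun v => l n v - v) (M := C1)
      (fun v hv => by simpa [Real.norm_eq_abs] using hC1 v hv) htIcc
    have : |t - u| = |l n t - t| := by rw [hlt_eq, abs_sub_comm]
    rw [this]
    exact hbd
  have htu' : |t - u| < min r (ε / 2) := lt_of_le_of_lt htu h1
  have htur : |t - u| < r := lt_of_lt_of_le htu' (min_le_left _ _)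
  have htuε : |t - u| < ε / 2 := lt_of_lt_of_le htu' (min_le_right _ _)
  -- bound on the functions so that unifNorm dominates pointwise
  obtain ⟨Mn, hMn⟩ := rcll_bounded (hxn n)
  have hbd2 : ∀ v ∈ Set.Icc (0:ℝ) 1, |xn n v - x (l n v)| ≤ Mn + Cx := by
    intro v hv
    calc |xn n v - x (l n v)| ≤ |xn n v| + |x (l n v)| := abs_sub _ _
      _ ≤ Mn + Cx := add_le_add (hMn v hv)
        (by simpa [Real.norm_eq_abs] using hCx (l n v) (hlbij.mapsTo hv))
  have hxnx : |xn n t - x u| < δ / 4 := by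
    have hbd := abs_le_unifNorm (f := fun v => xn n v - x (l n v)) (M := Mn + Cx) hbd2 htIcc
    rw [show xn n t - x (l n t) = xn n t - x u by simp [hlt_eq]] at hbd
    exact lt_of_le_of_lt hbd h2
  have hbt : |b t - b u| < δ / 4 := by
    have := hbr htIcc (show dist t u < r by rw [Real.dist_eq]; exact htur)
    rwa [Real.dist_eq] at this
  have hexit : b t ≤ xn n t := by
    have h1' := (abs_lt.mp hxnx).1
    have h2' := (abs_lt.mp hbt).2
    have hxu : x u = b u + δ := by simp only [hδdef]; ring
    linarith
  have hle : exitTime a b (xn n) ≤ t := exitTime_le_of_mem a b _ htIcc hexit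
  have htle : t ≤ u + ε / 2 := by
    have := (abs_lt.mp htuε).2
    linarith
  linarith
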